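/- Let M be a finitely generated multiplication R-module. If N is a 2-absorbing primary submodule of M, then (N :_R M) is a 2-absorbing primary ideal of R. -/

import Mathlib

open Submodule

variable {R : Type*} [CommRing R] {M : Type*} [AddCommGroup M] [Module R M]

/-- A prime submodule: proper, and `a • m ∈ P` implies `m ∈ P` or `a • ⊤ ≤ P`. -/
def IsPrimeSubmodule (P : Submodule R M) : Prop :=
  P ≠ ⊤ ∧ ∀ (a : R) (m : M), a • m ∈ P → m ∈ P ∨ a ∈ P.colon ⊤

/-- The `M`-radical of `N`: intersection of prime submodules containing `N`
(equal to `⊤` when there are none). -/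
def mRad (N : Submodule R M) : Submodule R M :=
  sInf {P : Submodule R M | IsPrimeSubmodule P ∧ N ≤ P}

/-- 2-absorbing primary submodule. -/
def Is2AbsorbingPrimary (N : Submodule R M) : Prop :=
  N ≠ ⊤ ∧ ∀ (a b : R) (m : M), (a * b) • m ∈ N →
    a • m ∈ mRad N ∨ b • m ∈ mRad N ∨ a * b ∈ N.colon ⊤

/-- Multiplication module: every submodule is `I • ⊤` for some ideal `I`. -/
def IsMultiplicationModule (R M : Type*) [CommRing R] [AddCommGroup M] [Module R M] : Prop :=
  ∀ N : Submodule R M, ∃ I : Ideal R, N = I • (⊤ : Submodule R M)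

/-- Primary submodule. -/
def IsPrimarySubmodule (P : Submodule R M) : Prop :=
  P ≠ ⊤ ∧ ∀ (a : R) (m : M), a • m ∈ P → m ∈ P ∨ a ∈ (P.colon ⊤).radical

/-- 2-absorbing primary ideal. -/
def Is2AbsorbingPrimaryIdeal {R : Type*} [CommRing R] (I : Ideal R) : Prop :=
  I ≠ ⊤ ∧ ∀ a b c : R, a * b * c ∈ I → a * b ∈ I ∨ a * c ∈ I.radical ∨ b * c ∈ I.radical

/-- 2-absorbing submodule. -/
def Is2AbsorbingSubmodule (K : Submodule R M) : Prop :=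
  K ≠ ⊤ ∧ ∀ (a b : R) (m : M), (a * b) • m ∈ K →
    a * b ∈ K.colon ⊤ ∨ a • m ∈ K ∨ b • m ∈ K


open Polynomial

/-- Determinant trick: if `x • m ∈ p • ⊤` for all `x ∈ I` and all `m`, with `M` f.g. and
`p` prime containing all elements annihilating `M`, then `I ≤ p`. -/
lemma lemA [Module.Finite R M] {p I : Ideal R} (hp : p.IsPrime)
    (hann : ∀ s : R, (∀ m : M, s • m = 0) → s ∈ p)
    (hI : ∀ x ∈ I, ∀ m : M, x • m ∈ p • (⊤ : Submodule R M)) : I ≤ p := by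
  intro x hx
  by_contra hxp
  set f : Module.End R M := x • LinearMap.id with hf
  obtain ⟨q, hq, -, hcoeff, heval⟩ :=
    LinearMap.exists_monic_and_coeff_mem_pow_and_aeval_eq_zero_of_range_le_smul R f p (by
      rintro _ ⟨m, rfl⟩
      exact hI x hx m)
  have hfeq : f = algebraMap R (Module.End R M) x :=
    (Module.algebraMap_end_eq_smul_id R R M x).symm
  have heval2 : ∀ m : M, (q.eval x) • m = 0 := by
    intro m
    have h1 : Polynomial.aeval f q = algebraMap R (Module.End R M) (q.eval x) := by
      rw [hfeq, Polynomial.aeval_algebraMap_apply_eq_algebraMap_eval]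
    have h2 := h1.symm.trans heval
    have h3 := congrArg (fun g : Module.End R M => g m) h2
    simpa [Module.algebraMap_end_apply] using h3
  have hqx : q.eval x ∈ p := hann _ heval2
  set n := q.natDegree with hn
  have hsum : q.eval x = ∑ i ∈ Finset.range n, q.coeff i * x ^ i + x ^ n := by
    rw [Polynomial.eval_eq_sum_range, Finset.sum_range_succ, hq.coeff_natDegree, one_mul]
  have hxn : x ^ n ∈ p := by
    have hs : ∑ i ∈ Finset.range n, q.coeff i * x ^ i ∈ p := by
      refine Ideal.sum_mem _ fun i hi => Ideal.mul_mem_right _ _ ?_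
      have : q.coeff i ∈ p ^ (n - i) := hcoeff i
      exact Ideal.pow_le_self (Nat.sub_ne_zero_of_lt (Finset.mem_range.1 hi)) this
    have := hqx
    rw [hsum] at this
    simpa using Ideal.sub_mem _ this hs
  exact hxp (hp.mem_of_pow_mem _ hxn)

lemma lemB [Module.Finite R M] (hM : IsMultiplicationModule R M) (N : Submodule R M) :
    (mRad N).colon ⊤ ≤ (N.colon ⊤).radical := by
  intro r hr
  rw [Ideal.radical_eq_sInf]
  refine Ideal.mem_sInf.2 ?_
  rintro p ⟨hle, hp⟩
  have hann : ∀ s : R, (∀ m : M, s • m = 0) → s ∈ p := fun s hs =>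
    hle (Submodule.mem_colon.2 fun m _ => by rw [hs m]; exact N.zero_mem)
  -- p • ⊤ is a prime submodule containing N
  have hpM : IsPrimeSubmodule (p • (⊤ : Submodule R M)) := by
    constructor
    · intro htop
      refine hp.ne_top (Ideal.eq_top_iff_one _ |>.2 ?_)
      exact lemA hp hann (I := ⊤) (fun x _ m => by rw [htop]; trivial) Submodule.mem_top
    · intro a m ham
      by_cases hap : a ∈ p
      · exact Or.inr (Submodule.mem_colon.2 fun x _ => Submodule.smul_mem_smul hap Submodule.mem_top)
      · left
        obtain ⟨I, hI⟩ := hM (Submodule.span R {m})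
        have hm : m ∈ I • (⊤ : Submodule R M) := hI ▸ Submodule.mem_span_singleton_self m
        have hIp : I ≤ p := by
          have hJ : Ideal.span {a} * I ≤ p := by
            refine lemA hp hann ?_
            intro y hy m'
            obtain ⟨z, hz, rfl⟩ := Ideal.mem_span_singleton_mul.1 hy
            have hzm : z • m' ∈ Submodule.span R {m} := by
              rw [hI]; exact Submodule.smul_mem_smul hz Submodule.mem_top
            obtain ⟨c, hc⟩ := Submodule.mem_span_singleton.1 hzm
            rw [mul_smul, ← hc, smul_comm]
            exact Submodule.smul_mem _ c ham
          intro i hi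
          have : a * i ∈ p := hJ (Ideal.mul_mem_mul (Ideal.mem_span_singleton_self a) hi)
          exact (hp.mem_or_mem this).resolve_left hap
        exact Submodule.smul_mono_left hIp hm
  have hNle : N ≤ p • (⊤ : Submodule R M) := by
    obtain ⟨J, hJ⟩ := hM N
    have hJp : J ≤ p := fun j hj => hle (Submodule.mem_colon.2 fun m _ => by
      rw [hJ]; exact Submodule.smul_mem_smul hj Submodule.mem_top)
    rw [hJ]; exact Submodule.smul_mono_left hJp
  have hrad : mRad N ≤ p • (⊤ : Submodule R M) := sInf_le ⟨hpM, hNle⟩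
  refine lemA hp hann (I := Ideal.span {r}) ?_ (Ideal.mem_span_singleton_self r)
  intro x hx m'
  obtain ⟨c, rfl⟩ := Ideal.mem_span_singleton'.1 hx
  rw [mul_smul]
  exact Submodule.smul_mem _ c (hrad (Submodule.mem_colon.1 hr m' (Set.mem_univ _)))

theorem stmt5 [Module.Finite R M] (hM : IsMultiplicationModule R M)
    (N : Submodule R M) (hN : Is2AbsorbingPrimary N) :
    Is2AbsorbingPrimaryIdeal (N.colon ⊤) := by
  constructor
  · intro h
    apply hN.1
    rw [eq_top_iff]
    intro m _
    have h1 : (1 : R) ∈ N.colon ⊤ := h ▸ Submodule.mem_top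
    simpa using Submodule.mem_colon.1 h1 m (Set.mem_univ _)
  · intro a b c habc
    by_cases hab : a * b ∈ N.colon ⊤
    · exact Or.inl hab
    have H : ∀ m : M, (a * c) • m ∈ mRad N ∨ (b * c) • m ∈ mRad N := by
      intro m
      have h1 : (a * b) • (c • m) ∈ N := by
        rw [smul_smul]
        exact Submodule.mem_colon.1 habc m (Set.mem_univ _)
      rcases hN.2 a b (c • m) h1 with h | h | h
      · left; rwa [smul_smul] at h
      · right; rwa [smul_smul] at h
      · exact absurd h hab
    have key : (∀ m : M, (a * c) • m ∈ mRad N) ∨ (∀ m : M, (b * c) • m ∈ mRad N) := by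
      by_contra hcon
      push_neg at hcon
      obtain ⟨⟨m1, h1⟩, ⟨m2, h2⟩⟩ := hcon
      have hb1 : (b * c) • m1 ∈ mRad N := (H m1).resolve_left h1
      have ha2 : (a * c) • m2 ∈ mRad N := (H m2).resolve_right h2
      rcases H (m1 + m2) with h | h
      · apply h1
        have := Submodule.sub_mem _ h ha2
        rwa [smul_add, add_sub_cancel_right] at this
      · apply h2
        have := Submodule.sub_mem _ h hb1
        rwa [smul_add, add_sub_cancel_left] at this
    rcases key with hk | hk
    · exact Or.inr (Or.inl (lemB hM N (Submodule.mem_colon.2 fun m _ => hk m)))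
    · exact Or.inr (Or.inr (lemB hM N (Submodule.mem_colon.2 fun m _ => hk m)))
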